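/- Fix τ ∈ ℝ and ω ∈ ℂ. Suppose α : ℝ → ℂ² is differentiable at every x ≠ 0 and satisfies i·σ₃·α'(x) + σ₁·α(x) = ω·α(x) for all x < 0 and i·σ₃·α'(x) + σ⋆(τ)·α(x) = ω·α(x) for all x > 0. Define β : ℝ → ℂ² by β(x) = σ₃·S(τ)·α(-x), i.e. β₁(x) = e^(iτ)·α₁(-x) and β₂(x) = -α₂(-x), where S(τ) = diag(e^(iτ), 1). Then β is differentiable at every x ≠ 0 and satisfies i·σ₃·β'(x) + σ₁·β(x) = -ω·β(x) for all x < 0 and i·σ₃·β'(x) + σ⋆(2π-τ)·β(x) = -ω·β(x) for all x > 0. -/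

import Mathlib

open Complex Matrix

/-- Pauli matrix σ₁. -/
def σ1 : Matrix (Fin 2) (Fin 2) ℂ := !![0, 1; 1, 0]

/-- Pauli matrix σ₃. -/
def σ3 : Matrix (Fin 2) (Fin 2) ℂ := !![1, 0; 0, -1]

/-- σ⋆(τ) = [[0, e^(-iτ)],[e^(iτ), 0]]. -/
noncomputable def σstar (τ : ℝ) : Matrix (Fin 2) (Fin 2) ℂ :=
  !![0, Complex.exp (-(Complex.I * τ)); Complex.exp (Complex.I * τ), 0]

theorem stmt17 (τ : ℝ) (ω : ℂ) (α : ℝ → Fin 2 → ℂ)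
    (hdiff : ∀ x : ℝ, x ≠ 0 → DifferentiableAt ℝ α x)
    (hleft : ∀ x : ℝ, x < 0 →
      Complex.I • σ3.mulVec (deriv α x) + σ1.mulVec (α x) = ω • α x)
    (hright : ∀ x : ℝ, 0 < x →
      Complex.I • σ3.mulVec (deriv α x) + (σstar τ).mulVec (α x) = ω • α x) :
    let β : ℝ → Fin 2 → ℂ := fun x =>
      ![Complex.exp (Complex.I * τ) * α (-x) 0, -α (-x) 1]
    (∀ x : ℝ, x ≠ 0 → DifferentiableAt ℝ β x) ∧
    (∀ x : ℝ, x < 0 →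
      Complex.I • σ3.mulVec (deriv β x) + σ1.mulVec (β x) = (-ω) • β x) ∧
    (∀ x : ℝ, 0 < x →
      Complex.I • σ3.mulVec (deriv β x) + (σstar (2 * Real.pi - τ)).mulVec (β x)
        = (-ω) • β x) := by
  intro β
  have key : ∀ x : ℝ, x ≠ 0 → HasDerivAt β
      ![-(Complex.exp (Complex.I * τ)) * deriv α (-x) 0, deriv α (-x) 1] x := by
    intro x hx
    have h := (hdiff (-x) (by simpa using hx)).hasDerivAt
    have h' : HasDerivAt (fun y : ℝ => α (-y)) (-(deriv α (-x))) x := by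
      exact (h.scomp x (hasDerivAt_neg x)).congr_deriv (by simp)
    rw [hasDerivAt_pi] at h' ⊢
    intro i
    fin_cases i
    · simpa [β, neg_mul, mul_comm] using (h' 0).const_mul (Complex.exp (Complex.I * τ))
    · simpa [β] using (h' 1).fun_neg
  have hE : Complex.exp (Complex.I * τ) * Complex.exp (-(Complex.I * τ)) = 1 := by
    rw [← Complex.exp_add]; simp
  have hσ : σstar (2 * Real.pi - τ) =
      !![0, Complex.exp (Complex.I * τ); Complex.exp (-(Complex.I * τ)), 0] := by
    have ea : Complex.exp (-(Complex.I * ((2 * Real.pi - τ : ℝ) : ℂ))) =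
        Complex.exp (Complex.I * τ) := by
      rw [show -(Complex.I * ((2 * Real.pi - τ : ℝ) : ℂ)) =
          Complex.I * τ - 2 * Real.pi * Complex.I by push_cast; ring,
        Complex.exp_sub, Complex.exp_two_pi_mul_I, div_one]
    have eb : Complex.exp (Complex.I * ((2 * Real.pi - τ : ℝ) : ℂ)) =
        Complex.exp (-(Complex.I * τ)) := by
      rw [show Complex.I * ((2 * Real.pi - τ : ℝ) : ℂ) =
          -(Complex.I * τ) + 2 * Real.pi * Complex.I by push_cast; ring,
        Complex.exp_add, Complex.exp_two_pi_mul_I, mul_one]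
    rw [σstar, ea, eb]
  refine ⟨fun x hx => (key x hx).differentiableAt, ?_, ?_⟩
  · intro x hx
    rw [(key x hx.ne).deriv]
    have h0 := congrFun (hright (-x) (by linarith)) 0
    have h1 := congrFun (hright (-x) (by linarith)) 1
    simp [σstar, σ3, mulVec, dotProduct, Fin.sum_univ_two] at h0 h1
    funext i
    fin_cases i <;>
      simp [β, σ1, σ3, mulVec, dotProduct, Fin.sum_univ_two]
    · linear_combination (-Complex.exp (Complex.I * τ)) * h0 + (α (-x) 1) * hE
    · linear_combination h1
  · intro x hx
    rw [(key x hx.ne').deriv, hσ]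
    have h0 := congrFun (hleft (-x) (by linarith)) 0
    have h1 := congrFun (hleft (-x) (by linarith)) 1
    simp [σ1, σ3, mulVec, dotProduct, Fin.sum_univ_two] at h0 h1
    funext i
    fin_cases i <;>
      simp [β, σ3, mulVec, dotProduct, Fin.sum_univ_two]
    · linear_combination (-Complex.exp (Complex.I * τ)) * h0
    · linear_combination h1 + (α (-x) 0) * hE
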